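/- Let α, τ, ξ be real numbers with 0 < α < 1/2, α ≤ τ < 1 and ξ ≥ 1/4. Then |T_s| > 2/π and 2/π > |T_B|, where |·| denotes the complex modulus. -/

import Mathlib

/-- The term `T_s` of the generalised Fredholm symbol on the segment `Γ₁`. -/
noncomputable def Ts (α τ ξ : ℝ) : ℂ :=
  Complex.sin ((Real.pi : ℂ) * (1 - (τ : ℂ) + (α : ℂ) - Complex.I * (ξ : ℂ))) /
    Complex.sin ((Real.pi : ℂ) * (1 - (τ : ℂ) + 2 * (α : ℂ) - Complex.I * (ξ : ℂ)))

/-- The term `T_B` of the generalised Fredholm symbol on the segment `Γ₁`. -/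
noncomputable def TB (α τ ξ : ℝ) : ℂ :=
  Complex.sin ((Real.pi : ℂ) * (α : ℂ)) / (Real.pi : ℂ) *
      Complex.Gamma ((τ : ℂ) - 2 * (α : ℂ) + 1 + Complex.I * (ξ : ℂ)) *
      Complex.Gamma (2 * (α : ℂ)) /
    Complex.Gamma ((τ : ℂ) + 1 + Complex.I * (ξ : ℂ))

open Real MeasureTheory intervalIntegral

lemma abs_sin_sq (a b : ℝ) :
    ‖Complex.sin ((a:ℂ) + (b:ℂ) * Complex.I)‖ ^ 2
      = Real.sin a ^ 2 + Real.sinh b ^ 2 := by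
  rw [Complex.sin_add_mul_I]
  rw [← Complex.ofReal_sin, ← Complex.ofReal_cos, ← Complex.ofReal_sinh, ← Complex.ofReal_cosh,
    Complex.sq_norm, ← Complex.ofReal_mul, ← Complex.ofReal_mul]
  rw [Complex.normSq_add_mul_I]
  nlinarith [Real.sin_sq_add_cos_sq a, Real.cosh_sq b]

lemma sinh_num (c : ℝ) (hc : Real.pi / 4 ≤ c) : (0.857 : ℝ) ≤ Real.sinh c := by
  have hx : (0.785398 : ℝ) ≤ c := by
    have := Real.pi_gt_d6
    linarith
  have h1 : Real.sinh 0.785398 ≤ Real.sinh c := Real.sinh_le_sinh.mpr hx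
  have hP : (2.174568 : ℝ) ≤ Real.exp 0.785398 := by
    have := Real.sum_le_exp_of_nonneg (x := 0.785398) (by norm_num) 4
    rw [Finset.sum_range_succ, Finset.sum_range_succ, Finset.sum_range_succ,
      Finset.sum_range_succ, Finset.sum_range_zero] at this
    simp [Nat.factorial] at this
    norm_num at this
    linarith
  have hN : Real.exp (-(0.785398:ℝ)) ≤ 0.45989 := by
    rw [Real.exp_neg, inv_le_comm₀ (by positivity) (by norm_num)]
    calc (0.45989:ℝ)⁻¹ ≤ 2.174568 := by norm_num
    _ ≤ Real.exp 0.785398 := hP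
  have : (0.857 : ℝ) ≤ Real.sinh 0.785398 := by
    rw [Real.sinh_eq]; linarith
  linarith

lemma ts_bound (α τ ξ : ℝ) (hξ : 1/4 ≤ ξ) : 2/Real.pi < ‖Ts α τ ξ‖ := by
  have hπ := Real.pi_gt_d6
  set a₁ : ℝ := Real.pi * (1 - τ + α) with ha₁
  set a₂ : ℝ := Real.pi * (1 - τ + 2*α) with ha₂
  set b : ℝ := -(Real.pi * ξ) with hb
  have e₁ : (Real.pi : ℂ) * (1 - (τ : ℂ) + (α : ℂ) - Complex.I * (ξ : ℂ))
      = ((a₁:ℝ):ℂ) + ((b:ℝ):ℂ) * Complex.I := by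
    rw [ha₁, hb]; push_cast; ring
  have e₂ : (Real.pi : ℂ) * (1 - (τ : ℂ) + 2 * (α : ℂ) - Complex.I * (ξ : ℂ))
      = ((a₂:ℝ):ℂ) + ((b:ℝ):ℂ) * Complex.I := by
    rw [ha₂, hb]; push_cast; ring
  have hS : (0.857 : ℝ) ≤ Real.sinh (Real.pi * ξ) := by
    apply sinh_num
    nlinarith [Real.pi_pos]
  have hsb : Real.sinh b ^ 2 = Real.sinh (Real.pi * ξ) ^ 2 := by
    rw [hb, Real.sinh_neg]; ring
  set S := Real.sinh (Real.pi * ξ) with hSdef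
  have hnum : ‖Complex.sin ((Real.pi : ℂ) * (1 - (τ : ℂ) + (α : ℂ) - Complex.I * (ξ : ℂ)))‖ ^ 2
      = Real.sin a₁ ^ 2 + S ^ 2 := by rw [e₁, abs_sin_sq, hsb]
  have hden : ‖Complex.sin ((Real.pi : ℂ) * (1 - (τ : ℂ) + 2 * (α : ℂ) - Complex.I * (ξ : ℂ)))‖ ^ 2
      = Real.sin a₂ ^ 2 + S ^ 2 := by rw [e₂, abs_sin_sq, hsb]
  rw [Ts, norm_div]
  set N := ‖Complex.sin ((Real.pi : ℂ) * (1 - (τ : ℂ) + (α : ℂ) - Complex.I * (ξ : ℂ)))‖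
  set D := ‖Complex.sin ((Real.pi : ℂ) * (1 - (τ : ℂ) + 2 * (α : ℂ) - Complex.I * (ξ : ℂ)))‖
  have hDpos : 0 < D := by
    have h2 : 0 < D ^ 2 := by rw [hden]; nlinarith [sq_nonneg (Real.sin a₂)]
    have h0 : 0 ≤ D := norm_nonneg _
    nlinarith
  rw [lt_div_iff₀ hDpos]
  have h2 : (2/Real.pi * D) ^ 2 < N ^ 2 := by
    have hD2 : D ^ 2 ≤ 1 + S ^ 2 := by
      rw [hden]; nlinarith [Real.neg_one_le_sin a₂, Real.sin_le_one a₂]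
    have hN2 : S ^ 2 ≤ N ^ 2 := by rw [hnum]; nlinarith [sq_nonneg (Real.sin a₁)]
    have key : 4 * (1 + S^2) < Real.pi ^ 2 * S ^ 2 := by nlinarith [sq_nonneg (Real.pi - 3.141592), sq_nonneg (S - 0.857), hS, hπ]
    have hπpos := Real.pi_pos
    calc (2/Real.pi * D) ^ 2 = 4 / Real.pi ^2 * D^2 := by ring
    _ ≤ 4 / Real.pi^2 * (1 + S^2) := by
        apply mul_le_mul_of_nonneg_left hD2; positivity
    _ < S ^ 2 := by
        rw [div_mul_eq_mul_div, div_lt_iff₀ (by positivity)]; linarith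
    _ ≤ N ^ 2 := hN2
  exact lt_of_pow_lt_pow_left₀ 2 (by positivity) h2

lemma realBeta_integrable {a b : ℝ} (ha : 0 < a) (hb : 0 < b) :
    IntervalIntegrable (fun t : ℝ => t ^ (a-1) * (1-t) ^ (b-1)) volume 0 1 := by
  have h := (Complex.betaIntegral_convergent (u := (a:ℂ)) (v := (b:ℂ))
    (by simpa using ha) (by simpa using hb)).norm
  apply h.congr_ae
  filter_upwards [MeasureTheory.ae_restrict_mem measurableSet_uIoc] with t ht
  rw [Set.uIoc_of_le (by norm_num : (0:ℝ) ≤ 1)] at ht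
  obtain ⟨h0, h1⟩ := ht
  have h1' : (0:ℝ) ≤ 1 - t := by linarith
  rw [norm_mul]
  have e1 : ((t:ℂ)) ^ ((a:ℂ)-1) = (((t ^ (a-1) : ℝ)):ℂ) := by
    rw [Complex.ofReal_cpow h0.le]; push_cast; ring_nf
  have e2 : ((1 - (t:ℂ))) ^ ((b:ℂ)-1) = (((1-t) ^ (b-1) : ℝ):ℂ) := by
    rw [show (1 - (t:ℂ)) = (((1-t:ℝ)):ℂ) by push_cast; ring,
      Complex.ofReal_cpow h1', ]
    push_cast; ring_nf
  rw [e1, e2, Complex.norm_real, Complex.norm_real, Real.norm_eq_abs, Real.norm_eq_abs,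
    abs_of_nonneg (Real.rpow_nonneg h0.le _), abs_of_nonneg (Real.rpow_nonneg h1' _)]

lemma realBeta_eq {a b : ℝ} (ha : 0 < a) (hb : 0 < b) :
    ∫ t in (0:ℝ)..1, t ^ (a-1) * (1-t) ^ (b-1)
      = Real.Gamma a * Real.Gamma b / Real.Gamma (a+b) := by
  have h := Complex.Gamma_mul_Gamma_eq_betaIntegral (s := (a:ℂ)) (t := (b:ℂ))
    (by simpa using ha) (by simpa using hb)
  have hbeta : Complex.betaIntegral (a:ℂ) (b:ℂ)
      = (((∫ t in (0:ℝ)..1, t ^ (a-1) * (1-t) ^ (b-1) : ℝ)):ℂ) := by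
    rw [Complex.betaIntegral, ← intervalIntegral.integral_ofReal]
    apply intervalIntegral.integral_congr
    intro t ht
    rw [Set.uIcc_of_le (by norm_num : (0:ℝ) ≤ 1)] at ht
    obtain ⟨h0, h1⟩ := ht
    have h1' : (0:ℝ) ≤ 1 - t := by linarith
    have e1 : ((t:ℂ)) ^ ((a:ℂ)-1) = (((t ^ (a-1) : ℝ)):ℂ) := by
      rw [Complex.ofReal_cpow h0]; push_cast; ring_nf
    have e2 : ((1 - (t:ℂ))) ^ ((b:ℂ)-1) = (((1-t) ^ (b-1) : ℝ):ℂ) := by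
      rw [show (1 - (t:ℂ)) = (((1-t:ℝ)):ℂ) by push_cast; ring, Complex.ofReal_cpow h1']
      push_cast; ring_nf
    simp only []
    rw [e1, e2]
    push_cast
    ring
  rw [hbeta] at h
  have hab : ((a:ℂ)) + (b:ℂ) = (((a+b : ℝ)):ℂ) := by push_cast; ring
  rw [hab, Complex.Gamma_ofReal, Complex.Gamma_ofReal, Complex.Gamma_ofReal] at h
  have h' : Real.Gamma a * Real.Gamma b
      = Real.Gamma (a+b) * ∫ t in (0:ℝ)..1, t ^ (a-1) * (1-t) ^ (b-1) := by
    exact_mod_cast h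
  have hpos : 0 < Real.Gamma (a+b) := Real.Gamma_pos_of_pos (by linarith)
  field_simp
  linarith [h']

lemma beta_self_lower {α : ℝ} (hα : 0 < α) (hα' : α < 1/2) :
    Real.pi < 2*α * ∫ t in (0:ℝ)..1, t ^ (α-1) * (1-t) ^ (α-1) := by
  have hint : IntervalIntegrable (fun t : ℝ => t ^ (α-1) * (1-t) ^ (α-1)) volume 0 1 :=
    realBeta_integrable hα hα
  have hint1 : IntervalIntegrable (fun t : ℝ => t ^ (α-1) * (1-t) ^ (α-1)) volume 0 (1/2) :=
    hint.mono_set (by rw [Set.uIcc_of_le (by norm_num : (0:ℝ) ≤ 1/2),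
      Set.uIcc_of_le (by norm_num : (0:ℝ) ≤ 1)]; apply Set.Icc_subset_Icc <;> norm_num)
  have hint2 : IntervalIntegrable (fun t : ℝ => t ^ (α-1) * (1-t) ^ (α-1)) volume (1/2) 1 :=
    hint.mono_set (by rw [Set.uIcc_of_le (by norm_num : (1/2:ℝ) ≤ 1),
      Set.uIcc_of_le (by norm_num : (0:ℝ) ≤ 1)]; apply Set.Icc_subset_Icc <;> norm_num)
  have hsplit : (∫ t in (0:ℝ)..1, t ^ (α-1) * (1-t) ^ (α-1))
      = (∫ t in (0:ℝ)..(1/2), t ^ (α-1) * (1-t) ^ (α-1))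
        + ∫ t in (1/2:ℝ)..1, t ^ (α-1) * (1-t) ^ (α-1) :=
    (intervalIntegral.integral_add_adjacent_intervals hint1 hint2).symm
  have hrefl : (∫ t in (1/2:ℝ)..1, t ^ (α-1) * (1-t) ^ (α-1))
      = ∫ t in (0:ℝ)..(1/2), t ^ (α-1) * (1-t) ^ (α-1) := by
    have h1 := intervalIntegral.integral_comp_sub_left (a := (0:ℝ)) (b := 1/2)
      (fun t : ℝ => t ^ (α-1) * (1-t) ^ (α-1)) 1
    norm_num at h1
    rw [← h1]
    apply intervalIntegral.integral_congr
    intro t _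
    simp only []
    ring
  -- lower bound for the half integral
  set G : ℝ → ℝ := fun t => (Real.arcsin (Real.sqrt t)) ^ (2*α) / α with hG
  have hcont : ContinuousOn G (Set.Icc 0 (1/2)) := by
    apply ContinuousOn.div_const
    apply ContinuousOn.rpow_const
    · exact (Real.continuous_arcsin.comp Real.continuous_sqrt).continuousOn
    · intro x _
      right; positivity
  have hderiv : ∀ x ∈ Set.Ioo (0:ℝ) (1/2), HasDerivWithinAt G
      ((Real.arcsin (Real.sqrt x)) ^ (2*α-1) / (Real.sqrt x * Real.sqrt (1-x)))
      (Set.Ioi x) x := by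
    intro x hx
    obtain ⟨hx0, hx1⟩ := hx
    have hs0 : 0 < Real.sqrt x := Real.sqrt_pos.mpr hx0
    have hs1 : Real.sqrt x < 1 := by
      rw [show (1:ℝ) = Real.sqrt 1 by simp]
      exact Real.sqrt_lt_sqrt hx0.le (by linarith)
    have ha0 : 0 < Real.arcsin (Real.sqrt x) := Real.arcsin_pos.mpr hs0
    have hq0 : 0 < Real.sqrt (1-x) := Real.sqrt_pos.mpr (by linarith)
    have d1 : HasDerivAt (fun t : ℝ => Real.sqrt t) (1/(2*Real.sqrt x)) x :=
      Real.hasDerivAt_sqrt hx0.ne'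
    have d2 : HasDerivAt Real.arcsin (1/Real.sqrt (1 - Real.sqrt x^2)) (Real.sqrt x) :=
      Real.hasDerivAt_arcsin (by intro h; rw [h] at hs0; linarith) hs1.ne
    have d3 := d2.comp x d1
    have d4 : HasDerivAt (fun y : ℝ => y ^ (2*α))
        (2*α * Real.arcsin (Real.sqrt x) ^ (2*α-1)) (Real.arcsin (Real.sqrt x)) :=
      Real.hasDerivAt_rpow_const (Or.inl ha0.ne')
    have d5 := ((d4.comp x d3).div_const α).hasDerivWithinAt (s := Set.Ioi x)
    refine d5.congr_deriv ?_
    rw [Real.sq_sqrt hx0.le]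
    field_simp
  have hφint : IntegrableOn (fun t : ℝ => t ^ (α-1) * (1-t) ^ (α-1)) (Set.Icc 0 (1/2)) volume := by
    rw [integrableOn_Icc_iff_integrableOn_Ioc]
    exact (intervalIntegrable_iff_integrableOn_Ioc_of_le (by norm_num)).mp hint1
  have hφg : ∀ x ∈ Set.Ioo (0:ℝ) (1/2),
      (Real.arcsin (Real.sqrt x)) ^ (2*α-1) / (Real.sqrt x * Real.sqrt (1-x))
        ≤ x ^ (α-1) * (1-x) ^ (α-1) := by
    intro x hx
    obtain ⟨hx0, hx1⟩ := hx
    have hx1' : (0:ℝ) < 1 - x := by linarith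
    have hs0 : 0 < Real.sqrt x := Real.sqrt_pos.mpr hx0
    have hs1 : Real.sqrt x < 1 := by
      rw [show (1:ℝ) = Real.sqrt 1 by simp]
      exact Real.sqrt_lt_sqrt hx0.le (by linarith)
    have hy0 : (0:ℝ) < x * (1-x) := by nlinarith
    have hsy : 0 < Real.sqrt (x*(1-x)) := Real.sqrt_pos.mpr hy0
    have hmul : Real.sqrt x * Real.sqrt (1-x) = Real.sqrt (x*(1-x)) :=
      (Real.sqrt_mul hx0.le _).symm
    have hle : Real.sqrt (x*(1-x)) ≤ Real.arcsin (Real.sqrt x) := by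
      calc Real.sqrt (x*(1-x)) = Real.sqrt x * Real.sqrt (1-x) := hmul.symm
      _ ≤ Real.sqrt x * 1 := by
          apply mul_le_mul_of_nonneg_left _ hs0.le
          exact Real.sqrt_le_one.mpr (by linarith)
      _ = Real.sqrt x := mul_one _
      _ ≤ Real.arcsin (Real.sqrt x) := by
          nth_rewrite 1 [← Real.sin_arcsin (by linarith : (-1:ℝ) ≤ Real.sqrt x) hs1.le]
          exact Real.sin_le (Real.arcsin_nonneg.mpr hs0.le)
    have h2 : (Real.arcsin (Real.sqrt x)) ^ (2*α-1) ≤ (Real.sqrt (x*(1-x))) ^ (2*α-1) :=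
      Real.rpow_le_rpow_of_nonpos hsy hle (by linarith)
    have hval : (Real.sqrt (x*(1-x))) ^ (2*α-1) / (Real.sqrt x * Real.sqrt (1-x))
        = x ^ (α-1) * (1-x) ^ (α-1) := by
      rw [hmul, Real.sqrt_eq_rpow, ← Real.rpow_mul hy0.le, ← Real.rpow_sub hy0]
      rw [show (1:ℝ)/2 * (2*α-1) - 1/2 = α - 1 by ring]
      exact Real.mul_rpow hx0.le hx1'.le
    rw [← hval]
    exact div_le_div_of_nonneg_right h2 (hmul ▸ hsy).le |>.trans_eq rfl
  have hG0 : G 0 = 0 := by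
    rw [hG]
    simp only [Real.sqrt_zero, Real.arcsin_zero]
    rw [Real.zero_rpow (by positivity)]
    simp
  have hGhalf : G (1/2) = (Real.pi/4) ^ (2*α) / α := by
    have h12 : Real.sqrt (1/2) = Real.sin (Real.pi/4) := by
      rw [Real.sin_pi_div_four]
      rw [show (1/2:ℝ) = (Real.sqrt 2/2)^2 by
        rw [div_pow, Real.sq_sqrt (by norm_num : (0:ℝ) ≤ 2)]; norm_num]
      exact Real.sqrt_sq (by positivity)
    rw [hG]
    simp only [h12]
    rw [Real.arcsin_sin (by linarith [Real.pi_pos]) (by linarith [Real.pi_pos])]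
  have hlow := intervalIntegral.sub_le_integral_of_hasDeriv_right_of_le (by norm_num : (0:ℝ) ≤ 1/2)
    hcont hderiv hφint hφg
  rw [hG0, hGhalf, sub_zero] at hlow
  have hπ4 : (Real.pi/4:ℝ) < (Real.pi/4) ^ (2*α) := by
    nth_rewrite 1 [← Real.rpow_one (Real.pi/4)]
    apply Real.rpow_lt_rpow_of_exponent_gt (by positivity)
      (by linarith [Real.pi_lt_d2]) (by linarith)
  have : Real.pi < 4*α * ((Real.pi/4) ^ (2*α) / α) := by
    rw [mul_div_assoc']
    rw [lt_div_iff₀ hα]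
    nlinarith
  calc Real.pi < 4*α * ((Real.pi/4) ^ (2*α) / α) := this
  _ ≤ 4*α * ∫ t in (0:ℝ)..(1/2), t ^ (α-1) * (1-t) ^ (α-1) := by
      apply mul_le_mul_of_nonneg_left hlow (by positivity)
  _ = 2*α * ∫ t in (0:ℝ)..1, t ^ (α-1) * (1-t) ^ (α-1) := by
      rw [hsplit, hrefl]; ring

lemma key_real {α : ℝ} (hα : 0 < α) (hα' : α < 1/2) :
    Real.sin (Real.pi*α) * (Real.Gamma (1-α) * Real.Gamma (2*α) / Real.Gamma (1+α)) < 2 := by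
  have hpi := Real.pi_pos
  have hs : 0 < Real.sin (Real.pi*α) :=
    Real.sin_pos_of_pos_of_lt_pi (by positivity) (by nlinarith)
  have hΓα := Real.Gamma_pos_of_pos hα
  have hΓ2α := Real.Gamma_pos_of_pos (by linarith : (0:ℝ) < 2*α)
  have hrefl := Real.Gamma_mul_Gamma_one_sub α
  rw [eq_div_iff hs.ne'] at hrefl
  have hadd : Real.Gamma (1+α) = α * Real.Gamma α := by
    rw [add_comm, Real.Gamma_add_one hα.ne']
  have hbeta := realBeta_eq hα hα
  rw [show α + α = 2*α by ring, eq_div_iff hΓ2α.ne'] at hbeta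
  have hlow := beta_self_lower hα hα'
  set Iα := ∫ t in (0:ℝ)..1, t ^ (α-1) * (1-t) ^ (α-1) with hIα
  have hB : 0 < α * Real.Gamma α := by positivity
  rw [hadd, ← mul_div_assoc, div_lt_iff₀ hB]
  have h4 : Real.pi * Real.Gamma (2*α) < 2*α*(Real.Gamma α * Real.Gamma α) := by
    calc Real.pi * Real.Gamma (2*α) < 2*α*Iα * Real.Gamma (2*α) := by
          apply mul_lt_mul_of_pos_right hlow hΓ2α
    _ = 2*α*(Real.Gamma α * Real.Gamma α) := by rw [← hbeta]; ring
  have h3 : Real.sin (Real.pi*α) * (Real.Gamma (1-α) * Real.Gamma (2*α)) * Real.Gamma α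
      = Real.pi * Real.Gamma (2*α) := by
    linear_combination Real.Gamma (2*α) * hrefl
  apply lt_of_mul_lt_mul_right _ hΓα.le
  calc Real.sin (Real.pi*α) * (Real.Gamma (1-α) * Real.Gamma (2*α)) * Real.Gamma α
      = Real.pi * Real.Gamma (2*α) := h3
  _ < 2*α*(Real.Gamma α * Real.Gamma α) := h4
  _ = 2 * (α * Real.Gamma α) * Real.Gamma α := by ring


lemma tb_bound (α τ ξ : ℝ) (hα : 0 < α) (hα' : α < 1/2) (hτ : α ≤ τ) (hτ' : τ < 1)
    (hξ : 1/4 ≤ ξ) : ‖TB α τ ξ‖ < 2/Real.pi := by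
  have hπ := Real.pi_pos
  set x : ℝ := τ - 2*α + 1 with hxdef
  have hx0 : (0:ℝ) < x := by rw [hxdef]; linarith
  have h2α0 : (0:ℝ) < 2*α := by linarith
  have h1α0 : (0:ℝ) < 1-α := by linarith
  set u : ℂ := (τ:ℂ) - 2*(α:ℂ) + 1 + Complex.I*(ξ:ℂ) with hudef
  set v : ℂ := 2*(α:ℂ) with hvdef
  have hxc : (x:ℂ) = (τ:ℂ) - 2*(α:ℂ) + 1 := by rw [hxdef]; push_cast; ring
  have hu : u = (x:ℂ) + (ξ:ℂ)*Complex.I := by rw [hudef, hxc]; ring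
  have hure : u.re = x := by rw [hu]; simp
  have hvre : v.re = 2*α := by rw [hvdef]; push_cast; simp
  have hsum : (τ:ℂ) + 1 + Complex.I*(ξ:ℂ) = u + v := by
    rw [hudef, hvdef]; push_cast; ring
  have hΓid := Complex.Gamma_mul_Gamma_eq_betaIntegral (s := u) (t := v)
    (by rw [hure]; exact hx0) (by rw [hvre]; exact h2α0)
  have hne : Complex.Gamma (u+v) ≠ 0 := by
    apply Complex.Gamma_ne_zero_of_re_pos
    rw [Complex.add_re, hure, hvre]; linarith
  have hTB : TB α τ ξ = (Complex.sin ((Real.pi:ℂ)*(α:ℂ))/(Real.pi:ℂ))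
      * Complex.betaIntegral u v := by
    simp only [TB]
    rw [hsum, div_eq_iff hne]
    linear_combination (Complex.sin ((Real.pi:ℂ)*(α:ℂ))/(Real.pi:ℂ)) * hΓid
  have hsin : 0 < Real.sin (Real.pi*α) :=
    Real.sin_pos_of_pos_of_lt_pi (by positivity) (by nlinarith)
  have habs : ‖TB α τ ξ‖
      = Real.sin (Real.pi*α)/Real.pi * ‖Complex.betaIntegral u v‖ := by
    rw [hTB, norm_mul, norm_div,
      show ((Real.pi:ℂ)*(α:ℂ)) = ((Real.pi*α:ℝ):ℂ) by push_cast; ring,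
      ← Complex.ofReal_sin, Complex.norm_real, Complex.norm_real, Real.norm_eq_abs, Real.norm_eq_abs,
      abs_of_pos hsin, abs_of_pos hπ]
  have hBb : ‖Complex.betaIntegral u v‖
      ≤ ∫ t in (0:ℝ)..1, t ^ (x-1) * (1-t) ^ (2*α-1) := by
    rw [Complex.betaIntegral]
    have habs0 : |∫ t in (0:ℝ)..1, t ^ (x-1) * (1-t) ^ (2*α-1)|
        = ∫ t in (0:ℝ)..1, t ^ (x-1) * (1-t) ^ (2*α-1) := by
      apply abs_of_nonneg
      apply intervalIntegral.integral_nonneg (by norm_num : (0:ℝ) ≤ 1)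
      intro t ht
      exact mul_nonneg (Real.rpow_nonneg ht.1 _)
        (Real.rpow_nonneg (by linarith [ht.2] : (0:ℝ) ≤ 1 - t) _)
    rw [← habs0]
    apply intervalIntegral.norm_integral_le_abs_of_norm_le ?_ (realBeta_integrable hx0 h2α0)
    filter_upwards [MeasureTheory.ae_restrict_mem measurableSet_uIoc] with t ht
    rw [Set.uIoc_of_le (by norm_num : (0:ℝ) ≤ 1)] at ht
    obtain ⟨h0, h1⟩ := ht
    rw [norm_mul]
    have e1 : ‖(t:ℂ) ^ (u-1)‖ = t ^ (x-1) := by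
      rw [Complex.norm_cpow_eq_rpow_re_of_pos h0, Complex.sub_re, hure, Complex.one_re]
    rw [e1]
    rcases eq_or_lt_of_le h1 with h1e | h1l
    · subst h1e
      rw [show (1:ℂ) - (1:ℝ) = 0 by norm_num, Complex.zero_cpow
        (by rw [hvdef]; intro h; apply_fun Complex.re at h;
            simp at h; nlinarith : v - 1 ≠ 0)]
      simp [Real.one_rpow]
      exact Real.rpow_nonneg le_rfl _
    · have : ((1:ℂ) - (t:ℝ)) = (((1-t:ℝ)):ℂ) := by push_cast; ring
      rw [this, Complex.norm_cpow_eq_rpow_re_of_pos (by linarith), Complex.sub_re, hvre,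
        Complex.one_re]
  have hmono : (∫ t in (0:ℝ)..1, t ^ (x-1) * (1-t) ^ (2*α-1))
      ≤ ∫ t in (0:ℝ)..1, t ^ ((1-α)-1) * (1-t) ^ (2*α-1) := by
    rw [intervalIntegral.integral_of_le (by norm_num : (0:ℝ) ≤ 1),
      intervalIntegral.integral_of_le (by norm_num : (0:ℝ) ≤ 1)]
    apply MeasureTheory.setIntegral_mono_on
    · exact (intervalIntegrable_iff_integrableOn_Ioc_of_le (by norm_num)).mp
        (realBeta_integrable hx0 h2α0)
    · exact (intervalIntegrable_iff_integrableOn_Ioc_of_le (by norm_num)).mp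
        (realBeta_integrable h1α0 h2α0)
    · exact measurableSet_Ioc
    · intro t ht
      apply mul_le_mul_of_nonneg_right
      · exact Real.rpow_le_rpow_of_exponent_ge ht.1 ht.2 (by rw [hxdef]; linarith)
      · exact Real.rpow_nonneg (by linarith [ht.2] : (0:ℝ) ≤ 1 - t) _
  have hI₁ : (∫ t in (0:ℝ)..1, t ^ ((1-α)-1) * (1-t) ^ (2*α-1))
      = Real.Gamma (1-α) * Real.Gamma (2*α) / Real.Gamma (1+α) := by
    rw [realBeta_eq h1α0 h2α0, show (1-α) + 2*α = 1+α by ring]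
  have hkey := key_real hα hα'
  calc ‖TB α τ ξ‖
      = Real.sin (Real.pi*α)/Real.pi * ‖Complex.betaIntegral u v‖ := habs
  _ ≤ Real.sin (Real.pi*α)/Real.pi
        * (Real.Gamma (1-α) * Real.Gamma (2*α) / Real.Gamma (1+α)) := by
      apply mul_le_mul_of_nonneg_left _ (by positivity)
      exact hBb.trans (hmono.trans_eq hI₁)
  _ = Real.sin (Real.pi*α) * (Real.Gamma (1-α) * Real.Gamma (2*α) / Real.Gamma (1+α))
        / Real.pi := by ring
  _ < 2/Real.pi := (div_lt_div_iff_of_pos_right hπ).mpr hkey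


/-- For `0 < α < 1/2`, `α ≤ τ < 1` and `ξ ≥ 1/4`, one has `|T_s| > 2/π > |T_B|`. -/
theorem abs_Ts_gt_two_div_pi_gt_abs_TB
    (α τ ξ : ℝ) (hα : 0 < α) (hα' : α < 1 / 2) (hτ : α ≤ τ) (hτ' : τ < 1)
    (hξ : 1 / 4 ≤ ξ) :
    2 / Real.pi < ‖Ts α τ ξ‖ ∧ ‖TB α τ ξ‖ < 2 / Real.pi :=
  ⟨ts_bound α τ ξ hξ, tb_bound α τ ξ hα hα' hτ hτ' hξ⟩
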